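/- In the discrete-time SIS Markov chain, the marginal infection probabilities satisfy p_i(t+1) ≤ (1-δ) p_i(t) + β ∑_{j ∼ i} p_j(t) for every node i and time t. -/

import Mathlib

open Finset

/-- One-step transition probability of the discrete-time SIS Markov chain on `G`:
given the current state `X`, each node updates independently; an infected node
recovers with probability `δ`; a susceptible node with `m` infected neighbors
becomes infected with probability `1 - (1-β)^m`. -/
def sisStep {n : ℕ} (G : SimpleGraph (Fin n)) [DecidableRel G.Adj] (β δ : ℝ)
    (X Y : Fin n → Bool) : ℝ :=
  ∏ i : Fin n,
    if X i = true then (if Y i = true then 1 - δ else δ)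
    else
      if Y i = true then
        1 - (1 - β) ^ ((G.neighborFinset i).filter fun j => X j = true).card
      else (1 - β) ^ ((G.neighborFinset i).filter fun j => X j = true).card

/-- Marginal probability of infection of node `i` under distribution `μ`. -/
def marg {n : ℕ} (μ : (Fin n → Bool) → ℝ) (i : Fin n) : ℝ :=
  ∑ X : Fin n → Bool, if X i = true then μ X else 0

/-- Pairwise probability that both `i` and `j` are infected under `μ`. -/
def pPair {n : ℕ} (μ : (Fin n → Bool) → ℝ) (i j : Fin n) : ℝ :=
  ∑ X : Fin n → Bool, if X i = true ∧ X j = true then μ X else 0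

/-- Probability that `i` is healthy and `j` is infected under `μ`. -/
def qPair {n : ℕ} (μ : (Fin n → Bool) → ℝ) (i j : Fin n) : ℝ :=
  ∑ X : Fin n → Bool, if X i = false ∧ X j = true then μ X else 0


lemma sum_prod_cond {n : ℕ} (g : Fin n → Bool → ℝ)
    (h1 : ∀ k, g k true + g k false = 1) (i : Fin n) :
    (∑ Y : Fin n → Bool, if Y i = true then ∏ k, g k (Y k) else 0) = g i true := by
  have key : ∀ h : Fin n → Bool → ℝ,
      (∑ Y : Fin n → Bool, ∏ k, h k (Y k)) = ∏ k, (h k true + h k false) := by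
    intro h
    have := Finset.prod_univ_sum (fun _ : Fin n => (Finset.univ : Finset Bool))
      (fun k b => h k b)
    rw [Fintype.piFinset_univ] at this
    rw [← this]
    apply Finset.prod_congr rfl
    intro k _
    simp
  set h' : Fin n → Bool → ℝ := fun k b => if k = i then (if b = true then g k b else 0) else g k b
    with hh'
  have e1 : ∀ Y : Fin n → Bool,
      (if Y i = true then ∏ k, g k (Y k) else 0) = ∏ k, h' k (Y k) := by
    intro Y
    by_cases hYi : Y i = true
    · simp only [hYi, if_true]
      apply Finset.prod_congr rfl
      intro k _
      by_cases hk : k = i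
      · subst hk; simp [h', hYi]
      · simp [h', hk]
    · rw [if_neg hYi]
      symm
      apply Finset.prod_eq_zero (Finset.mem_univ i)
      simp only [Bool.not_eq_true] at hYi
      simp [h', hYi]
  simp_rw [e1, key h']
  rw [Finset.prod_eq_single i]
  · simp [h']
  · intro k _ hk; simp [h', hk, h1 k]
  · simp

theorem stmt9 {n : ℕ} (G : SimpleGraph (Fin n)) [DecidableRel G.Adj]
    (β δ : ℝ) (hβ0 : 0 ≤ β) (hβ1 : β ≤ 1) (hδ0 : 0 ≤ δ) (hδ1 : δ ≤ 1)
    (μ : ℕ → (Fin n → Bool) → ℝ)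
    (hnn : ∀ t X, 0 ≤ μ t X)
    (hsum : ∀ t, ∑ X : Fin n → Bool, μ t X = 1)
    (hstep : ∀ t Y, μ (t + 1) Y = ∑ X : Fin n → Bool, μ t X * sisStep G β δ X Y)
    (t : ℕ) (i : Fin n) :
    marg (μ (t + 1)) i ≤
      (1 - δ) * marg (μ t) i + β * ∑ j ∈ G.neighborFinset i, marg (μ t) j := by
  classical
  -- factor functions
  set g : (Fin n → Bool) → Fin n → Bool → ℝ := fun X k b =>
    if X k = true then (if b = true then 1 - δ else δ)
    else
      if b = true then
        1 - (1 - β) ^ ((G.neighborFinset k).filter fun j => X j = true).card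
      else (1 - β) ^ ((G.neighborFinset k).filter fun j => X j = true).card
    with hg
  have hfac : ∀ X Y, sisStep G β δ X Y = ∏ k, g X k (Y k) := fun X Y => rfl
  have hsum1 : ∀ X k, g X k true + g X k false = 1 := by
    intro X k
    by_cases h : X k = true <;> simp [g, h]
  have hmargstep : ∀ X : Fin n → Bool,
      (∑ Y : Fin n → Bool, if Y i = true then sisStep G β δ X Y else 0) = g X i true := by
    intro X
    simp_rw [hfac]
    exact sum_prod_cond (g X) (hsum1 X) i
  have hrewrite : marg (μ (t + 1)) i = ∑ X : Fin n → Bool, μ t X * g X i true := by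
    unfold marg
    simp_rw [hstep t]
    have : ∀ Y : Fin n → Bool,
        (if Y i = true then ∑ X : Fin n → Bool, μ t X * sisStep G β δ X Y else 0)
          = ∑ X : Fin n → Bool, μ t X * (if Y i = true then sisStep G β δ X Y else 0) := by
      intro Y
      by_cases h : Y i = true <;> simp [h]
    simp_rw [this]
    rw [Finset.sum_comm]
    apply Finset.sum_congr rfl
    intro X _
    rw [← Finset.mul_sum, hmargstep X]
  rw [hrewrite]
  -- pointwise bound
  have hbound : ∀ X : Fin n → Bool, g X i true ≤
      (1 - δ) * (if X i = true then (1:ℝ) else 0)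
        + β * ∑ j ∈ G.neighborFinset i, (if X j = true then (1:ℝ) else 0) := by
    intro X
    have hsumnn : 0 ≤ ∑ j ∈ G.neighborFinset i, (if X j = true then (1:ℝ) else 0) := by
      apply Finset.sum_nonneg; intro j _; positivity
    by_cases h : X i = true
    · simp only [g, h, if_true]
      nlinarith [mul_nonneg hβ0 hsumnn]
    · have hXi : X i = false := by simpa using h
      have hcard : (∑ j ∈ G.neighborFinset i, (if X j = true then (1:ℝ) else 0))
          = (((G.neighborFinset i).filter fun j => X j = true).card : ℝ) := by
        simp [Finset.sum_boole]
      rw [hcard]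
      set m := ((G.neighborFinset i).filter fun j => X j = true).card with hm
      have hber : 1 + (m : ℝ) * (-β) ≤ (1 + (-β)) ^ m := by
        apply one_add_mul_le_pow; linarith
      have hkey : (1 : ℝ) - (1 - β) ^ m ≤ β * m := by
        have h2 : (1 : ℝ) + (-β) = 1 - β := by ring
        rw [h2] at hber; nlinarith
      have hgval : g X i true = 1 - (1 - β) ^ m := by simp [g, hXi, hm]
      rw [hgval, hXi]
      simp only [Bool.false_eq_true, if_false]
      linarith
  calc ∑ X : Fin n → Bool, μ t X * g X i true
      ≤ ∑ X : Fin n → Bool, μ t X *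
        ((1 - δ) * (if X i = true then (1:ℝ) else 0)
          + β * ∑ j ∈ G.neighborFinset i, (if X j = true then (1:ℝ) else 0)) := by
        apply Finset.sum_le_sum
        intro X _
        exact mul_le_mul_of_nonneg_left (hbound X) (hnn t X)
    _ = (1 - δ) * marg (μ t) i + β * ∑ j ∈ G.neighborFinset i, marg (μ t) j := by
        simp_rw [mul_add]
        rw [Finset.sum_add_distrib]
        congr 1
        · unfold marg
          rw [Finset.mul_sum]
          apply Finset.sum_congr rfl
          intro X _
          by_cases h : X i = true
          · simp [h]; ring
          · simp [h]
        · unfold marg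
          simp_rw [Finset.mul_sum]
          rw [Finset.sum_comm]
          apply Finset.sum_congr rfl
          intro j _
          apply Finset.sum_congr rfl
          intro X _
          by_cases h : X j = true
          · simp [h]; ring
          · simp [h]
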